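/- (Supporting hyperplane through prescribed points of a convex curve) Let σ : [a,b] → ℝ^d be an injective continuous convex curve, i.e., for every affine hyperplane H ⊂ ℝ^d the set {t ∈ [a,b] : σ(t) ∈ H} has at most d elements. Let 1 ≤ ℓ ≤ d and let a < t₁ < t₂ < ⋯ < t_ℓ < b be given points. Then there exists a nonconstant affine function L : ℝ^d → ℝ such that L(σ(t_i)) = 0 for every i = 1, …, ℓ, the composite L∘σ is not identically zero, and L∘σ changes sign only at the given points with alternation: there is ε ∈ {1,−1} such that ε·(−1)^j·L(σ(t)) ≥ 0 for all t in the j-th of the ℓ+1 intervals [a,t₁], [t₁,t₂], …, [t_ℓ,b] (j = 0, …, ℓ). -/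

import Mathlib

open Matrix Fin Set Filter

variable {d : ℕ}




/-- row vector of a point: coordinates plus a trailing 1 -/
noncomputable def rvec (x : Fin d → ℝ) : Fin (d + 1) → ℝ := Fin.snoc x 1

/-- affine map from coefficient vector -/
noncomputable def mkL (w : Fin d → ℝ) (c : ℝ) : (Fin d → ℝ) →ᵃ[ℝ] ℝ where
  toFun x := (∑ j, w j * x j) + c
  linear :=
    { toFun := fun x => ∑ j, w j * x j
      map_add' := by intro x y; simp [mul_add, Finset.sum_add_distrib]
      map_smul' := by intro r x; simp [Finset.mul_sum]; ring_nf; simp [mul_comm, mul_left_comm] }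
  map_vadd' := by
    intro p v
    simp [mul_add, Finset.sum_add_distrib]
    ring

lemma mkL_apply (w : Fin d → ℝ) (c : ℝ) (x : Fin d → ℝ) :
    mkL w c x = (∑ j, w j * x j) + c := rfl

lemma mkL_linear_apply (w : Fin d → ℝ) (c : ℝ) (x : Fin d → ℝ) :
    (mkL w c).linear x = ∑ j, w j * x j := rfl

lemma mkL_linear_ne_zero (w : Fin d → ℝ) (c : ℝ) (hw : w ≠ 0) :
    (mkL w c).linear ≠ 0 := by
  obtain ⟨j, hj⟩ := Function.ne_iff.mp hw
  intro h
  apply hj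
  have := congrArg (fun f => f (Pi.single j (1:ℝ))) (h : (mkL w c).linear = 0)
  simp [mkL_linear_apply, Pi.single_apply, mul_comm] at this
  simpa using this

/-- key nonvanishing: any d+1 distinct parameter points give affinely independent
curve points, i.e. the determinant is nonzero -/
lemma det_ne_zero (a b : ℝ) (σ : ℝ → Fin d → ℝ)
    (hconv : ∀ L : (Fin d → ℝ) →ᵃ[ℝ] ℝ, L.linear ≠ 0 →
      {t ∈ Set.Icc a b | L (σ t) = 0}.encard ≤ d)
    (z : Fin (d + 1) → ℝ) (hz : ∀ i, z i ∈ Set.Icc a b)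
    (hinj : Function.Injective z) :
    (Matrix.of fun i => rvec (σ (z i))).det ≠ 0 := by
  intro hdet
  obtain ⟨v, hv0, hmv⟩ := (Matrix.exists_mulVec_eq_zero_iff).mpr hdet
  set w : Fin d → ℝ := fun j => v j.castSucc with hw
  have hrow : ∀ i, (∑ j, w j * σ (z i) j) + v (Fin.last d) = 0 := by
    intro i
    have := congrFun hmv i
    simp only [Matrix.mulVec, dotProduct, Matrix.of_apply, Pi.zero_apply] at this
    rw [Fin.sum_univ_castSucc] at this
    simpa [rvec, Fin.snoc_castSucc, Fin.snoc_last, mul_comm] using this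
  have hwne : w ≠ 0 := by
    intro hw0
    apply hv0
    have hlast : v (Fin.last d) = 0 := by
      have := hrow 0
      simpa [hw0] using this
    funext k
    induction k using Fin.lastCases with
    | last => exact hlast
    | cast k => exact congrFun hw0 k
  have hL := hconv (mkL w (v (Fin.last d))) (mkL_linear_ne_zero _ _ hwne)
  have hsub : Set.range z ⊆ {t ∈ Set.Icc a b | mkL w (v (Fin.last d)) (σ t) = 0} := by
    rintro _ ⟨i, rfl⟩
    exact ⟨hz i, by rw [mkL_apply]; exact hrow i⟩
  have hcard : (Set.range z).encard = (d + 1 : ℕ) := by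
    rw [← Set.image_univ, Set.InjOn.encard_image (hinj.injOn), Set.encard_univ]
    simp
  have := (Set.encard_mono hsub).trans hL
  rw [hcard] at this
  exact_mod_cast (by omega : ¬ (d + 1 ≤ d)) (by exact_mod_cast this)

lemma exists_tau (a b : ℝ) (hab : a < b) (σ : ℝ → Fin d → ℝ)
    (hσc : ContinuousOn σ (Set.Icc a b))
    (hne : ∀ z : Fin (d + 1) → ℝ, (∀ i, z i ∈ Set.Icc a b) → Function.Injective z →
      (Matrix.of fun i => rvec (σ (z i))).det ≠ 0) :
    ∃ τ : ℝ, (τ = 1 ∨ τ = -1) ∧ ∀ z : Fin (d + 1) → ℝ, (∀ i, z i ∈ Set.Icc a b) →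
      StrictMono z → 0 < τ * (Matrix.of fun i => rvec (σ (z i))).det := by
  set D : (Fin (d+1) → ℝ) → ℝ := fun z => (Matrix.of fun i => rvec (σ (z i))).det with hD
  set z0 : Fin (d + 1) → ℝ := fun i => a + ((i : ℝ) + 1) / ((d : ℝ) + 2) * (b - a) with hz0
  have hd2 : (0:ℝ) < (d : ℝ) + 2 := by positivity
  have hba : (0:ℝ) < b - a := by linarith
  have hz0m : StrictMono z0 := by
    intro i j hij
    have hij' : (i : ℝ) < j := by exact_mod_cast hij
    simp only [hz0]
    gcongr
  have hz0mem : ∀ i, z0 i ∈ Set.Icc a b := by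
    intro i
    have h1 : (0:ℝ) < ((i:ℝ)+1)/((d:ℝ)+2) := by positivity
    have h2 : ((i:ℝ)+1)/((d:ℝ)+2) ≤ 1 := by
      rw [div_le_one hd2]
      have : (i:ℝ) ≤ d := by exact_mod_cast Nat.le_of_lt_succ i.isLt
      linarith
    simp only [hz0]
    constructor
    · nlinarith
    · nlinarith
  set τ : ℝ := if 0 < D z0 then 1 else -1 with hτ
  have hτpos : 0 < τ * D z0 := by
    rcases lt_trichotomy (D z0) 0 with h | h | h
    · rw [hτ, if_neg (by linarith)]; linarith
    · exact absurd h (hne z0 hz0mem hz0m.injective)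
    · rw [hτ, if_pos h]; linarith
  refine ⟨τ, by rw [hτ]; split_ifs <;> simp, ?_⟩
  intro z hzmem hzm
  by_contra hcon
  push_neg at hcon
  have hDz := hne z hzmem hzm.injective
  have hτne : τ ≠ 0 := by rw [hτ]; split_ifs <;> norm_num
  have hneg : τ * D z < 0 := lt_of_le_of_ne hcon (mul_ne_zero hτne hDz)
  set w : ℝ → Fin (d+1) → ℝ := fun θ i => (1 - θ) * z0 i + θ * z i with hwdef
  have hwm : ∀ θ ∈ Set.Icc (0:ℝ) 1, StrictMono (w θ) := by
    intro θ hθ i j hij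
    simp only [hwdef]
    rcases eq_or_lt_of_le hθ.1 with h0 | h0
    · have := hz0m hij
      rw [← h0]; simpa using this
    · have h1 := mul_pos h0 (sub_pos.mpr (hzm hij))
      have h2 := mul_nonneg (by linarith [hθ.2] : (0:ℝ) ≤ 1 - θ) (sub_nonneg.mpr (hz0m hij).le)
      nlinarith
  have hwmem : ∀ θ ∈ Set.Icc (0:ℝ) 1, ∀ i, w θ i ∈ Set.Icc a b := by
    intro θ hθ i
    have h1 := (hz0mem i).1; have h2 := (hz0mem i).2
    have h3 := (hzmem i).1; have h4 := (hzmem i).2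
    have h5 := hθ.1; have h6 := hθ.2
    constructor
    · simp only [hwdef]; nlinarith
    · simp only [hwdef]; nlinarith
  have hmat : ContinuousOn (fun θ => (Matrix.of fun i => rvec (σ (w θ i)))
      : ℝ → Matrix (Fin (d+1)) (Fin (d+1)) ℝ) (Set.Icc 0 1) := by
    apply continuousOn_pi.mpr; intro i
    apply continuousOn_pi.mpr; intro k
    have hwc : ContinuousOn (fun θ => σ (w θ i)) (Set.Icc 0 1) := by
      apply hσc.comp (Continuous.continuousOn (by fun_prop)) (fun θ hθ => hwmem θ hθ i)
    induction k using Fin.lastCases with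
    | last => simpa [rvec, Fin.snoc_last] using continuousOn_const
    | cast k => simpa [rvec, Matrix.of_apply, Fin.snoc_castSucc] using continuousOn_pi.mp hwc k
  have hcontD : ContinuousOn (fun θ => τ * D (w θ)) (Set.Icc (0:ℝ) 1) :=
    continuousOn_const.mul ((continuous_id.matrix_det).comp_continuousOn hmat)
  have hw0 : w 0 = z0 := by funext i; simp [hwdef]
  have hw1 : w 1 = z := by funext i; simp [hwdef]
  have hmem0 : (0:ℝ) ∈ Set.Icc (τ * D (w 1)) (τ * D (w 0)) := by
    rw [hw0, hw1]; exact ⟨hneg.le, hτpos.le⟩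
  obtain ⟨θ, hθmem, hθ0⟩ := intermediate_value_Icc' (by norm_num : (0:ℝ) ≤ 1) hcontD hmem0
  have : D (w θ) = 0 := by
    have h2 : τ * D (w θ) = 0 := hθ0
    rcases mul_eq_zero.mp h2 with h | h
    · exact absurd h hτne
    · exact h
  exact hne (w θ) (hwmem θ hθmem) (hwm θ hθmem).injective this

lemma strictMono_snoc (s : Fin d → ℝ) (u : ℝ) (hs : StrictMono s) (hu : ∀ i, s i < u) :
    StrictMono (Fin.snoc s u : Fin (d+1) → ℝ) := by
  intro i j hij
  induction j using Fin.lastCases with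
  | last =>
    induction i using Fin.lastCases with
    | last => exact absurd hij (lt_irrefl _)
    | cast i => rw [Fin.snoc_castSucc, Fin.snoc_last]; exact hu i
  | cast j =>
    induction i using Fin.lastCases with
    | last => exact absurd (lt_trans hij (Fin.castSucc_lt_last j)) (lt_irrefl _)
    | cast i =>
      rw [Fin.snoc_castSucc, Fin.snoc_castSucc]
      exact hs (Fin.castSucc_lt_castSucc_iff.mp hij)

lemma region_sign (a b : ℝ) (σ : ℝ → Fin d → ℝ) (τ : ℝ)
    (hτ : ∀ z : Fin (d + 1) → ℝ, (∀ i, z i ∈ Set.Icc a b) → StrictMono z →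
      0 < τ * (Matrix.of fun i => rvec (σ (z i))).det) :
    ∀ m j, j + m = d → ∀ s : Fin d → ℝ, ∀ u : ℝ, StrictMono s →
      (∀ i, s i ∈ Set.Icc a b) → u ∈ Set.Icc a b →
      (∀ i : Fin d, (i:ℕ) < j → s i < u) → (∀ i : Fin d, j ≤ (i:ℕ) → u < s i) →
      0 < τ * (-1)^m * (Matrix.of fun i : Fin (d+1) => rvec (σ ((Fin.snoc s u : Fin (d+1) → ℝ) i))).det := by
  intro m
  induction m with
  | zero =>
    intro j hj s u hs hsm hum hlow hhigh
    have hall : ∀ i, s i < u := fun i => hlow i (by omega)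
    have hmono := strictMono_snoc s u hs hall
    have hmem : ∀ i : Fin (d+1), (Fin.snoc s u : Fin (d+1) → ℝ) i ∈ Set.Icc a b := by
      intro i
      induction i using Fin.lastCases with
      | last => simpa [Fin.snoc_last] using hum
      | cast i => simpa [Fin.snoc_castSucc] using hsm i
    simpa using hτ _ hmem hmono
  | succ m ih =>
    intro j hj s u hs hsm hum hlow hhigh
    have hjd : j < d := by omega
    set k : Fin d := ⟨j, hjd⟩ with hk
    set s' : Fin d → ℝ := fun i => if i = k then u else s i with hs'
    set u' : ℝ := s k with hu'
    -- region facts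
    have huk : u < s k := hhigh k (le_refl j)
    have hs'm : StrictMono s' := by
      intro i1 i2 h12
      simp only [hs']
      split_ifs with h1 h2 h2
      · rw [h1, h2] at h12; exact absurd h12 (lt_irrefl _)
      · subst h1
        exact lt_trans huk (hs h12)
      · subst h2
        exact hlow i1 (by rw [Fin.lt_def] at h12; exact h12)
      · exact hs h12
    have hs'mem : ∀ i, s' i ∈ Set.Icc a b := by
      intro i
      simp only [hs']
      split_ifs with h
      · exact hum
      · exact hsm i
    have hlow' : ∀ i : Fin d, (i:ℕ) < j + 1 → s' i < u' := by
      intro i hi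
      simp only [hs', hu']
      split_ifs with h
      · exact huk
      · have : (i:ℕ) < j := by
          rcases Nat.lt_succ_iff_lt_or_eq.mp hi with h' | h'
          · exact h'
          · exact absurd (Fin.ext h' : i = k) h
        exact lt_trans (hlow i this) huk
    have hhigh' : ∀ i : Fin d, j + 1 ≤ (i:ℕ) → u' < s' i := by
      intro i hi
      have hik : i ≠ k := by
        intro h; rw [h] at hi; simp only [hk] at hi; omega
      simp only [hs', hu', if_neg hik]
      exact hs (by rw [Fin.lt_def]; simp only [hk]; omega)
    have IH := ih (j+1) (by omega) s' u' hs'm hs'mem (hsm k) hlow' hhigh'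
    -- swap identity
    have hz : (Fin.snoc s' u' : Fin (d+1) → ℝ)
        = fun i => (Fin.snoc s u : Fin (d+1) → ℝ) (Equiv.swap (Fin.castSucc k) (Fin.last d) i) := by
      funext i
      induction i using Fin.lastCases with
      | last =>
        rw [Fin.snoc_last, Equiv.swap_apply_right, Fin.snoc_castSucc]
      | cast i =>
        by_cases hik : i = k
        · subst hik
          rw [Fin.snoc_castSucc, Equiv.swap_apply_left, Fin.snoc_last]
          simp [hs']
        · have h1 : Fin.castSucc i ≠ Fin.castSucc k := by
            simpa [Fin.castSucc_inj] using hik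
          have h2 : Fin.castSucc i ≠ Fin.last d := (Fin.castSucc_lt_last i).ne
          rw [Fin.snoc_castSucc, Equiv.swap_apply_of_ne_of_ne h1 h2, Fin.snoc_castSucc]
          simp [hs', if_neg hik]
    have hdet : (Matrix.of fun i : Fin (d+1) => rvec (σ ((Fin.snoc s' u' : Fin (d+1) → ℝ) i))).det
        = - (Matrix.of fun i : Fin (d+1) => rvec (σ ((Fin.snoc s u : Fin (d+1) → ℝ) i))).det := by
      have hmeq : (Matrix.of fun i : Fin (d+1) => rvec (σ ((Fin.snoc s' u' : Fin (d+1) → ℝ) i)))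
          = (Matrix.of fun i : Fin (d+1) => rvec (σ ((Fin.snoc s u : Fin (d+1) → ℝ) i))).submatrix
              (Equiv.swap (Fin.castSucc k) (Fin.last d)) id := by
        ext i l
        rw [Matrix.submatrix_apply]
        simp only [Matrix.of_apply, id]
        rw [congrFun hz i]
      rw [hmeq, Matrix.det_permute, Equiv.Perm.sign_swap (Fin.castSucc_lt_last k).ne]
      simp
    rw [hdet] at IH
    calc (0:ℝ) < τ * (-1)^m * -(Matrix.of fun i : Fin (d+1) => rvec (σ ((Fin.snoc s u : Fin (d+1) → ℝ) i))).det := IH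
      _ = τ * (-1)^(m+1) * (Matrix.of fun i : Fin (d+1) => rvec (σ ((Fin.snoc s u : Fin (d+1) → ℝ) i))).det := by
          rw [pow_succ]; ring

noncomputable def fmat (σ : ℝ → Fin d → ℝ) (s : Fin d → ℝ) (x : Fin d → ℝ) :
    Matrix (Fin (d+1)) (Fin (d+1)) ℝ :=
  Matrix.of (Fin.snoc (fun i : Fin d => rvec (σ (s i))) (rvec x))

lemma fmat_snoc (σ : ℝ → Fin d → ℝ) (s : Fin d → ℝ) (u : ℝ) :
    fmat σ s (σ u) = Matrix.of fun i : Fin (d+1) => rvec (σ ((Fin.snoc s u : Fin (d+1) → ℝ) i)) := by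
  ext i l
  simp only [fmat, Matrix.of_apply]
  induction i using Fin.lastCases with
  | last => rw [Fin.snoc_last, Fin.snoc_last]
  | cast i => rw [Fin.snoc_castSucc, Fin.snoc_castSucc]

lemma fmat_updateRow (σ : ℝ → Fin d → ℝ) (s : Fin d → ℝ) (x : Fin d → ℝ) (v : Fin (d+1) → ℝ) :
    (fmat σ s x).updateRow (Fin.last d) v
      = Matrix.of (Fin.snoc (fun i : Fin d => rvec (σ (s i))) v) := by
  ext i l
  by_cases h : i = Fin.last d
  · subst h; rw [Matrix.updateRow_self]; simp [Fin.snoc_last]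
  · rw [Matrix.updateRow_ne h]
    obtain ⟨i, rfl⟩ := Fin.exists_castSucc_eq.mpr h
    simp [fmat, Fin.snoc_castSucc]

noncomputable def uvec (σ : ℝ → Fin d → ℝ) (s : Fin d → ℝ) : Fin (d+1) → ℝ :=
  fun k => ((fmat σ s 0).updateRow (Fin.last d) (fun j => if k = j then 1 else 0)).det

noncomputable def gval (v : Fin (d+1) → ℝ) (x : Fin d → ℝ) : ℝ := ∑ k, rvec x k * v k

lemma gval_eq (v : Fin (d+1) → ℝ) (x : Fin d → ℝ) :
    gval v x = (∑ j : Fin d, x j * v j.castSucc) + v (Fin.last d) := by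
  rw [gval, Fin.sum_univ_castSucc]
  simp [rvec, Fin.snoc_castSucc, Fin.snoc_last]

lemma gval_smul (c : ℝ) (v : Fin (d+1) → ℝ) (x : Fin d → ℝ) :
    gval (c • v) x = c * gval v x := by
  simp [gval, Finset.mul_sum]; ring_nf
  congr 1; funext k; ring

lemma det_fmat_eq_gval (σ : ℝ → Fin d → ℝ) (s : Fin d → ℝ) (x : Fin d → ℝ) :
    (fmat σ s x).det = gval (uvec σ s) x := by
  set lam : (Fin (d+1) → ℝ) →ₗ[ℝ] ℝ :=
    { toFun := fun v => ((fmat σ s 0).updateRow (Fin.last d) v).det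
      map_add' := fun u v => Matrix.det_updateRow_add _ _ u v
      map_smul' := fun c v => Matrix.det_updateRow_smul _ _ c v } with hlam
  have h1 : (fmat σ s x).det = lam (rvec x) := by
    rw [hlam]
    simp only [LinearMap.coe_mk, AddHom.coe_mk]
    rw [fmat_updateRow]
    rfl
  rw [h1, LinearMap.pi_apply_eq_sum_univ lam (rvec x)]
  rw [gval]
  congr 1

lemma neg_one_pow_sub_real (d j : ℕ) (h : j ≤ d) : ((-1:ℝ))^(d-j) = (-1)^d * (-1)^j := by
  have h1 : ((-1:ℝ))^(d-j) * (-1)^j = (-1)^d := by rw [← pow_add, Nat.sub_add_cancel h]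
  have h2 : ((-1:ℝ))^j * (-1)^j = 1 := by
    rw [← pow_add]; exact Even.neg_one_pow ⟨j, rfl⟩
  calc ((-1:ℝ))^(d-j) = (-1)^(d-j) * ((-1)^j * (-1)^j) := by rw [h2, mul_one]
    _ = ((-1)^(d-j) * (-1)^j) * (-1)^j := by ring
    _ = (-1)^d * (-1)^j := by rw [h1]

lemma det_fmat_vanish (σ : ℝ → Fin d → ℝ) (s : Fin d → ℝ) (i : Fin d) :
    (fmat σ s (σ (s i))).det = 0 := by
  apply Matrix.det_zero_of_row_eq (i := Fin.castSucc i) (j := Fin.last d)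
    (Fin.castSucc_lt_last i).ne
  funext l
  simp only [fmat, Matrix.of_apply]
  rw [Fin.snoc_castSucc, Fin.snoc_last]



/-- Supporting hyperplane through prescribed points of a convex curve: given an
injective continuous convex curve `σ : [a,b] → ℝ^d` and points
`a < t₁ < ⋯ < t_ℓ < b` with `1 ≤ ℓ ≤ d`, there is a nonconstant affine function `L`
vanishing at the `σ(tᵢ)`, with `L∘σ` not identically zero on `[a,b]`, such that `L∘σ`
changes sign only at the given points with alternation. Here
`y = Fin.cons a (Fin.snoc t b)` is the extended sequence
`a = y₀ < y₁ = t₁ < ⋯ < y_ℓ = t_ℓ < y_{ℓ+1} = b`. -/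
theorem exists_supporting_hyperplane_through_points
    (d : ℕ) (a b : ℝ) (hab : a < b) (σ : ℝ → Fin d → ℝ)
    (hσc : ContinuousOn σ (Set.Icc a b)) (hσinj : Set.InjOn σ (Set.Icc a b))
    (hconv : ∀ L : (Fin d → ℝ) →ᵃ[ℝ] ℝ, L.linear ≠ 0 →
      {t ∈ Set.Icc a b | L (σ t) = 0}.encard ≤ d)
    (ℓ : ℕ) (hℓ1 : 1 ≤ ℓ) (hℓd : ℓ ≤ d)
    (t : Fin ℓ → ℝ) (ht : StrictMono t) (htmem : ∀ i, t i ∈ Set.Ioo a b) :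
    ∃ L : (Fin d → ℝ) →ᵃ[ℝ] ℝ, L.linear ≠ 0 ∧ (∀ i, L (σ (t i)) = 0) ∧
      (∃ s ∈ Set.Icc a b, L (σ s) ≠ 0) ∧
      ∃ ε : ℝ, (ε = 1 ∨ ε = -1) ∧ ∀ j : Fin (ℓ + 1),
        ∀ s ∈ Set.Icc ((Fin.cons a (Fin.snoc t b) : Fin (ℓ + 2) → ℝ) j.castSucc)
          ((Fin.cons a (Fin.snoc t b) : Fin (ℓ + 2) → ℝ) j.succ),
          0 ≤ ε * (-1) ^ (j : ℕ) * L (σ s) := by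
  classical
  obtain ⟨τ, hτ1, hτpos⟩ := exists_tau a b hab σ hσc (det_ne_zero a b σ hconv)
  set m : ℕ := d - ℓ with hm
  set T : ℝ := t ⟨ℓ-1, by omega⟩ with hT
  have hTmem := htmem ⟨ℓ-1, by omega⟩
  have hTb : T < b := hTmem.2
  have haT : a < T := hTmem.1
  have htT : ∀ i : Fin ℓ, t i ≤ T := by
    intro i
    apply ht.monotone
    rw [Fin.le_def]
    simp only []
    omega
  set c0 : ℝ := (b - T) / (m + 1) with hc0
  have hc0pos : 0 < c0 := by rw [hc0]; apply div_pos (by linarith) (by positivity)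
  set δ : ℕ → ℝ := fun n => c0 / (n + 1) with hδ
  have hδpos : ∀ n, 0 < δ n := by intro n; rw [hδ]; positivity
  have hδc0 : ∀ n, δ n ≤ c0 := by
    intro n; rw [hδ]
    apply div_le_self hc0pos.le
    have : (0:ℝ) ≤ (n:ℝ) := Nat.cast_nonneg n
    linarith
  have hδlim : Filter.Tendsto δ Filter.atTop (nhds 0) := by
    have h1 : Filter.Tendsto (fun n : ℕ => 1 / ((n:ℝ) + 1)) Filter.atTop (nhds 0) :=
      tendsto_one_div_add_atTop_nhds_zero_nat
    have h2 := h1.const_mul c0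
    rw [mul_zero] at h2
    convert h2 using 1
    funext n
    simp only [hδ]
    ring
  have hkey : ∀ n, T < b - (m:ℝ) * δ n := by
    intro n
    have h1 : (m:ℝ) * δ n ≤ m * c0 :=
      mul_le_mul_of_nonneg_left (hδc0 n) (Nat.cast_nonneg m)
    have hm1 : (0:ℝ) < (m:ℝ) + 1 := by positivity
    have h3 : (m:ℝ)/((m:ℝ)+1) < 1 := (div_lt_one hm1).mpr (by linarith)
    have h2 : (m:ℝ) * c0 < b - T := by
      calc (m:ℝ)*c0 = (b-T) * ((m:ℝ)/((m:ℝ)+1)) := by rw [hc0]; ring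
        _ < (b-T)*1 := mul_lt_mul_of_pos_left h3 (by linarith)
        _ = b - T := mul_one _
    linarith
  -- the point configurations
  set s : ℕ → Fin d → ℝ :=
    fun n i => if h : (i:ℕ) < ℓ then t ⟨i, h⟩ else b - ((d - (i:ℕ) : ℕ):ℝ) * δ n with hsdef
  have hs_low : ∀ n (i : Fin d) (h : (i:ℕ) < ℓ), s n i = t ⟨i, h⟩ := by
    intro n i h; rw [hsdef]; simp only [dif_pos h]
  have hs_high : ∀ n (i : Fin d), ℓ ≤ (i:ℕ) →
      s n i = b - ((d - (i:ℕ) : ℕ):ℝ) * δ n := by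
    intro n i h; rw [hsdef]; simp only [dif_neg (not_lt.mpr h)]
  have hs_high_bounds : ∀ n (i : Fin d), ℓ ≤ (i:ℕ) →
      b - (m:ℝ) * δ n ≤ s n i ∧ s n i < b := by
    intro n i hi
    rw [hs_high n i hi]
    have hc1 : ((d - (i:ℕ) : ℕ):ℝ) ≤ (m:ℝ) := by
      exact_mod_cast (by omega : d - (i:ℕ) ≤ m)
    have hc2 : (1:ℝ) ≤ ((d - (i:ℕ) : ℕ):ℝ) := by
      exact_mod_cast (by omega : 1 ≤ d - (i:ℕ))
    constructor
    · nlinarith [hδpos n]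
    · nlinarith [hδpos n]
  have hs_mono : ∀ n, StrictMono (s n) := by
    intro n i1 i2 h12
    rw [Fin.lt_def] at h12
    by_cases h1 : (i1:ℕ) < ℓ
    · by_cases h2 : (i2:ℕ) < ℓ
      · rw [hs_low n i1 h1, hs_low n i2 h2]
        exact ht (by rw [Fin.lt_def]; exact h12)
      · rw [hs_low n i1 h1]
        calc t ⟨i1, h1⟩ ≤ T := htT _
          _ < b - (m:ℝ) * δ n := hkey n
          _ ≤ s n i2 := (hs_high_bounds n i2 (not_lt.mp h2)).1
    · have h2 : ℓ ≤ (i2:ℕ) := by omega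
      rw [hs_high n i1 (not_lt.mp h1), hs_high n i2 h2]
      have : ((d - (i2:ℕ) : ℕ):ℝ) < ((d - (i1:ℕ) : ℕ):ℝ) := by
        exact_mod_cast (by omega : d - (i2:ℕ) < d - (i1:ℕ))
      nlinarith [hδpos n]
  have hs_mem : ∀ n (i : Fin d), s n i ∈ Set.Icc a b := by
    intro n i
    by_cases h1 : (i:ℕ) < ℓ
    · rw [hs_low n i h1]
      exact ⟨(htmem _).1.le, (htmem _).2.le⟩
    · have hb := hs_high_bounds n i (not_lt.mp h1)
      constructor
      · linarith [hkey n, hb.1]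
      · exact hb.2.le
  -- sign positivity in regions
  have hregion : ∀ n (j : ℕ), j ≤ d → ∀ x : ℝ, x ∈ Set.Icc a b →
      (∀ i : Fin d, (i:ℕ) < j → s n i < x) → (∀ i : Fin d, j ≤ (i:ℕ) → x < s n i) →
      0 < τ * (-1:ℝ)^(d-j) * (fmat σ (s n) (σ x)).det := by
    intro n j hj x hx h1 h2
    rw [fmat_snoc]
    exact region_sign a b σ τ hτpos (d-j) j (by omega) (s n) x (hs_mono n) (hs_mem n) hx h1 h2
  -- coefficient vectors
  set u : ℕ → Fin (d+1) → ℝ := fun n => uvec σ (s n) with hu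
  have hu' : ∀ n, uvec σ (s n) = u n := fun _ => rfl
  have hu_ne : ∀ n, u n ≠ 0 := by
    intro n h0
    have hra := hregion n 0 (by omega) a ⟨le_refl a, hab.le⟩
      (by intro i hi; omega)
      (by
        intro i _
        by_cases h1 : (i:ℕ) < ℓ
        · rw [hs_low n i h1]; exact (htmem _).1
        · have hb := hs_high_bounds n i (not_lt.mp h1)
          linarith [hkey n, hb.1])
    rw [det_fmat_eq_gval, hu' n] at hra
    rw [h0] at hra
    simp [gval] at hra
  set v : ℕ → Fin (d+1) → ℝ := fun n => ‖u n‖⁻¹ • u n with hv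
  have hv_sphere : ∀ n, v n ∈ Metric.sphere (0 : Fin (d+1) → ℝ) 1 := by
    intro n
    rw [mem_sphere_zero_iff_norm, hv]
    simp only [norm_smul, norm_inv, norm_norm]
    exact inv_mul_cancel₀ (norm_ne_zero_iff.mpr (hu_ne n))
  set ε : ℝ := τ * (-1:ℝ)^d with hε
  have hεpm : ε = 1 ∨ ε = -1 := by
    rcases hτ1 with h | h <;> rcases Nat.even_or_odd d with hp | hp <;>
      rw [hε, h] <;> simp [hp.neg_one_pow]
  -- per-n vanishing at the t i
  have hvzero : ∀ n (i : Fin ℓ), gval (v n) (σ (t i)) = 0 := by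
    intro n i
    have hidx : (i:ℕ) < d := lt_of_lt_of_le i.isLt hℓd
    have h1 : (fmat σ (s n) (σ (t i))).det = 0 := by
      have := det_fmat_vanish σ (s n) ⟨i, hidx⟩
      rwa [hs_low n ⟨i, hidx⟩ i.isLt, (by rw [Fin.eta] : (⟨(i:ℕ), i.isLt⟩ : Fin ℓ) = i)] at this
    rw [det_fmat_eq_gval, hu' n] at h1
    rw [hv, gval_smul, h1, mul_zero]
  -- per-n nonnegativity in regions
  have hvnn : ∀ n (j : ℕ), j ≤ ℓ → ∀ x ∈ Set.Icc a b,
      (∀ i : Fin ℓ, (i:ℕ) < j → t i < x) → (∀ i : Fin ℓ, j ≤ (i:ℕ) → x < t i) →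
      x < b - (m:ℝ) * δ n → 0 ≤ ε * (-1:ℝ)^j * gval (v n) (σ x) := by
    intro n j hj x hx h1 h2 hxb
    have hr := hregion n j (le_trans hj hℓd) x hx
      (by
        intro i hi
        have hil : (i:ℕ) < ℓ := lt_of_lt_of_le hi hj
        rw [hs_low n i hil]
        exact h1 ⟨i, hil⟩ hi)
      (by
        intro i hi
        by_cases hil : (i:ℕ) < ℓ
        · rw [hs_low n i hil]
          exact h2 ⟨i, hil⟩ hi
        · calc x < b - (m:ℝ) * δ n := hxb
            _ ≤ s n i := (hs_high_bounds n i (not_lt.mp hil)).1)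
    rw [neg_one_pow_sub_real d j (le_trans hj hℓd)] at hr
    rw [det_fmat_eq_gval, hu' n] at hr
    have hr' : 0 < ε * (-1:ℝ)^j * gval (u n) (σ x) := by
      calc (0:ℝ) < τ * ((-1:ℝ)^d * (-1)^j) * gval (u n) (σ x) := hr
        _ = ε * (-1:ℝ)^j * gval (u n) (σ x) := by rw [hε]; ring
    rw [hv, gval_smul]
    have hnn : (0:ℝ) ≤ ‖u n‖⁻¹ := inv_nonneg.mpr (norm_nonneg _)
    calc (0:ℝ) ≤ ‖u n‖⁻¹ * (ε * (-1:ℝ)^j * gval (u n) (σ x)) :=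
          mul_nonneg hnn hr'.le
      _ = ε * (-1:ℝ)^j * (‖u n‖⁻¹ * gval (u n) (σ x)) := by ring
  -- compactness and limit
  obtain ⟨U, hUs, φ, hφm, hφlim⟩ :=
    (isCompact_sphere (0 : Fin (d+1) → ℝ) 1).tendsto_subseq hv_sphere
  have hU1 : ‖U‖ = 1 := mem_sphere_zero_iff_norm.mp hUs
  have hgc : ∀ x : Fin d → ℝ, Continuous fun w : Fin (d+1) → ℝ => gval w x := by
    intro x
    unfold gval
    exact continuous_finset_sum _ fun k _ => continuous_const.mul (continuous_apply k)
  have hgtend : ∀ x : Fin d → ℝ,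
      Filter.Tendsto (fun k => gval (v (φ k)) x) Filter.atTop (nhds (gval U x)) := by
    intro x
    exact ((hgc x).tendsto U).comp hφlim
  have hU0 : ∀ i : Fin ℓ, gval U (σ (t i)) = 0 := by
    intro i
    have h1 := hgtend (σ (t i))
    have h2 : (fun k => gval (v (φ k)) (σ (t i))) = fun _ => (0:ℝ) :=
      funext fun k => hvzero (φ k) i
    rw [h2] at h1
    exact tendsto_nhds_unique h1 tendsto_const_nhds
  have hUnn : ∀ (j : ℕ), j ≤ ℓ → ∀ x ∈ Set.Icc a b,
      (∀ i : Fin ℓ, (i:ℕ) < j → t i < x) → (∀ i : Fin ℓ, j ≤ (i:ℕ) → x < t i) →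
      x < b → 0 ≤ ε * (-1:ℝ)^j * gval U (σ x) := by
    intro j hj x hx h1 h2 hxb
    have htend : Filter.Tendsto (fun k => ε * (-1:ℝ)^j * gval (v (φ k)) (σ x))
        Filter.atTop (nhds (ε * (-1:ℝ)^j * gval U (σ x))) :=
      (hgtend (σ x)).const_mul _
    apply ge_of_tendsto htend
    have hev : ∀ᶠ k in Filter.atTop, x < b - (m:ℝ) * δ (φ k) := by
      have hδφ : Filter.Tendsto (fun k => b - (m:ℝ) * δ (φ k)) Filter.atTop (nhds b) := by
        have h3 : Filter.Tendsto (δ ∘ φ) Filter.atTop (nhds 0) :=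
          hδlim.comp hφm.tendsto_atTop
        have h4 := h3.const_mul (m:ℝ)
        have h5 := (tendsto_const_nhds (x := b)).sub h4
        simpa using h5
      exact hδφ.eventually (eventually_gt_nhds hxb)
    exact hev.mono fun k hk => hvnn (φ k) j hj x hx h1 h2 hk
  have hUb : 0 ≤ ε * (-1:ℝ)^ℓ * gval U (σ b) := by
    have hnnIoo : ∀ x ∈ Set.Ioo T b, 0 ≤ ε * (-1:ℝ)^ℓ * gval U (σ x) := by
      intro x hx
      apply hUnn ℓ (le_refl ℓ) x ⟨by linarith [hx.1], hx.2.le⟩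
      · intro i _; exact lt_of_le_of_lt (htT i) hx.1
      · intro i hi; exact absurd i.isLt (by omega)
      · exact hx.2
    have hcw : ContinuousWithinAt (fun x => ε * (-1:ℝ)^ℓ * gval U (σ x)) (Set.Ioo T b) b := by
      have h1 : ContinuousWithinAt σ (Set.Icc a b) b :=
        hσc.continuousWithinAt ⟨hab.le, le_refl b⟩
      have hgc2 : Continuous fun x : Fin d → ℝ => gval U x := by
        have heq : (fun x : Fin d → ℝ => gval U x)
            = fun x => (∑ j : Fin d, x j * U j.castSucc) + U (Fin.last d) :=
          funext fun x => gval_eq U x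
        rw [heq]
        exact (continuous_finset_sum _ fun k _ =>
          (continuous_apply k).mul continuous_const).add continuous_const
      have h2 : ContinuousWithinAt (fun x => gval U (σ x)) (Set.Icc a b) b :=
        hgc2.continuousAt.comp_continuousWithinAt h1
      exact (continuousWithinAt_const.mul h2).mono
        (fun x hx => ⟨by linarith [hx.1], hx.2.le⟩)
    have hbcl : b ∈ closure (Set.Ioo T b) := by
      rw [closure_Ioo hTb.ne]
      exact ⟨hTb.le, le_refl b⟩
    haveI hne : (nhdsWithin b (Set.Ioo T b)).NeBot :=
      mem_closure_iff_nhdsWithin_neBot.mp hbcl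
    apply ge_of_tendsto hcw
    exact eventually_mem_nhdsWithin.mono fun x hx => hnnIoo x hx
  -- final affine map
  set w : Fin d → ℝ := fun j => U j.castSucc with hw
  set cc : ℝ := U (Fin.last d) with hcc
  have hgU : ∀ x : Fin d → ℝ, gval U x = mkL w cc x := by
    intro x
    rw [gval_eq, mkL_apply, hw, hcc]
    congr 1
    exact Finset.sum_congr rfl fun j _ => mul_comm _ _
  have hwne : w ≠ 0 := by
    intro h0
    have h1 : cc = 0 := by
      have := hU0 ⟨0, by omega⟩
      rw [hgU, mkL_apply] at this
      simpa [h0] using this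
    have hU00 : U = 0 := by
      funext k
      induction k using Fin.lastCases with
      | last => exact h1
      | cast k => exact congrFun h0 k
    rw [hU00] at hU1
    simp at hU1
  refine ⟨mkL w cc, mkL_linear_ne_zero _ _ hwne, ?_, ?_, ε, hεpm, ?_⟩
  · intro i
    rw [← hgU]
    exact hU0 i
  · by_contra hc
    push_neg at hc
    have hLset : {x ∈ Set.Icc a b | mkL w cc (σ x) = 0} = Set.Icc a b :=
      Set.ext fun x => ⟨fun h => h.1, fun hx => ⟨hx, hc x hx⟩⟩
    have hcv := hconv (mkL w cc) (mkL_linear_ne_zero _ _ hwne)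
    rw [hLset, (Set.Icc_infinite hab).encard_eq] at hcv
    simp at hcv
  · intro j x hx
    have hupper : (Fin.cons a (Fin.snoc t b) : Fin (ℓ+2) → ℝ) j.succ
        = if h : (j:ℕ) < ℓ then t ⟨j, h⟩ else b := by
      rw [Fin.cons_succ]
      by_cases h : (j:ℕ) < ℓ
      · rw [dif_pos h]
        have hjc : j = Fin.castSucc (⟨j, h⟩ : Fin ℓ) := by
          ext; simp
        conv_lhs => rw [hjc]
        rw [Fin.snoc_castSucc]
      · rw [dif_neg h]
        have hjl : j = Fin.last ℓ := by
          ext; simp only [Fin.val_last]; omega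
        rw [hjl, Fin.snoc_last]
    have hub : (Fin.cons a (Fin.snoc t b) : Fin (ℓ+2) → ℝ) j.succ ≤ b := by
      rw [hupper]
      split_ifs with h
      · exact (htmem _).2.le
      · exact le_refl b
    by_cases hst : ∃ i : Fin ℓ, x = t i
    · obtain ⟨i, rfl⟩ := hst
      rw [← hgU, hU0 i, mul_zero]
    · by_cases hsb : x = b
      · have hjℓ : (j:ℕ) = ℓ := by
          by_contra hne'
          have hjl : (j:ℕ) < ℓ := by omega
          have h2 := hx.2
          rw [hupper, dif_pos hjl] at h2
          rw [hsb] at h2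
          exact absurd (lt_of_le_of_lt h2 (htmem _).2) (lt_irrefl b)
        rw [hsb, ← hgU, hjℓ]
        exact hUb
      · have hxb : x < b := lt_of_le_of_ne (le_trans hx.2 hub) hsb
        have hlow2 : ∀ i : Fin ℓ, (i:ℕ) < (j:ℕ) → t i < x := by
          intro i hi
          have hj0 : (j:ℕ) ≠ 0 := by omega
          have hjlower : (Fin.cons a (Fin.snoc t b) : Fin (ℓ+2) → ℝ) j.castSucc
              = t ⟨(j:ℕ)-1, by omega⟩ := by
            have hjs : j = (⟨(j:ℕ)-1, by omega⟩ : Fin ℓ).succ := by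
              ext; simp only [Fin.val_succ]; omega
            conv_lhs => rw [hjs]
            rw [← Fin.succ_castSucc, Fin.cons_succ, Fin.snoc_castSucc]
          have hle : t i ≤ t ⟨(j:ℕ)-1, by omega⟩ := by
            apply ht.monotone
            rw [Fin.le_def]
            simp only []
            omega
          have : t i ≤ x := le_trans hle (hjlower ▸ hx.1)
          exact lt_of_le_of_ne this fun h => hst ⟨i, h.symm⟩
        have hhigh2 : ∀ i : Fin ℓ, (j:ℕ) ≤ (i:ℕ) → x < t i := by
          intro i hi
          have hjl : (j:ℕ) < ℓ := lt_of_le_of_lt hi i.isLt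
          have h2 := hx.2
          rw [hupper, dif_pos hjl] at h2
          have hle : t ⟨j, hjl⟩ ≤ t i := by
            apply ht.monotone
            rw [Fin.le_def]
            simp only []
            omega
          have : x ≤ t i := le_trans h2 hle
          exact lt_of_le_of_ne this fun h => hst ⟨i, h⟩
        have hxa : a ≤ x := by
          refine le_trans ?_ hx.1
          by_cases hj0 : (j:ℕ) = 0
          · have h0' : j.castSucc = 0 := by ext; simp [hj0]
            rw [h0', Fin.cons_zero]
          · have hjs : j = (⟨(j:ℕ)-1, by omega⟩ : Fin ℓ).succ := by
              ext; simp only [Fin.val_succ]; omega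
            conv_rhs => rw [hjs]
            rw [← Fin.succ_castSucc, Fin.cons_succ, Fin.snoc_castSucc]
            exact (htmem _).1.le
        rw [← hgU (σ x)]
        exact hUnn (j:ℕ) (by omega) x ⟨hxa, hxb.le⟩ hlow2 hhigh2 hxb
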